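/- Let Γ be a group, h : Γ → ℤ a group homomorphism, α a nonzero complex number, n ≥ 2, and z_1, …, z_{n−1} : Γ → ℂ arbitrary maps. Define ϱ(γ) as the n×n matrix with ϱ(γ)_{1,1} = α^{h(γ)}, ϱ(γ)_{1,j} = z_{j−1}(γ) for 2 ≤ j ≤ n, ϱ(γ)_{i,1} = 0 for 2 ≤ i ≤ n, and ϱ(γ)_{i,j} = (J_{n−1}^{h(γ)})_{i−1,j−1} for 2 ≤ i, j ≤ n. Then ϱ : Γ → GL(n,ℂ) is a group homomorphism if and only if for each 1 ≤ k ≤ n−1 and all γ₁, γ₂ ∈ Γ: z_k(γ₁γ₂) = z_k(γ₁) + α^{h(γ₁)} z_k(γ₂) + Σ_{i=1}^{k−1} z_i(γ₁) h_{k−i}(γ₂), i.e. δz_k + Σ_{i=1}^{k−1} z_i ⌣ h_{k−i} = 0. -/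

import Mathlib

open Matrix

noncomputable section

/-- Generalized binomial coefficient C(m,k) for m : ℤ, as a complex number. -/
def gbinom (m : ℤ) (k : ℕ) : ℂ :=
  (∏ i ∈ Finset.range k, ((m : ℂ) - i)) / (Nat.factorial k)

/-- The n×n nilpotent Jordan matrix N. -/
def Nmat (n : ℕ) : Matrix (Fin n) (Fin n) ℂ :=
  Matrix.of fun i j => if (i : ℕ) + 1 = (j : ℕ) then 1 else 0

/-- The unipotent Jordan block J = I + N. -/
def Jmat (n : ℕ) : Matrix (Fin n) (Fin n) ℂ := 1 + Nmat n

lemma Jmat_blockTriangular (n : ℕ) : (Jmat n).BlockTriangular id := by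
  intro i j hij
  have hji : (j : ℕ) < (i : ℕ) := hij
  simp only [Jmat, Matrix.add_apply, Matrix.one_apply, Nmat, Matrix.of_apply]
  rw [if_neg (by intro h; subst h; exact lt_irrefl _ hji), if_neg (by omega)]
  simp

lemma Jmat_isUnit (n : ℕ) : IsUnit (Jmat n) := by
  rw [Matrix.isUnit_iff_isUnit_det,
    Matrix.det_of_upperTriangular (Jmat_blockTriangular n)]
  have : ∀ i : Fin n, Jmat n i i = 1 := by
    intro i
    simp [Jmat, Matrix.one_apply, Nmat]
  simp [this]

/-- Integer powers (positive and negative) of the unipotent Jordan block. -/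
def Jz (n : ℕ) (m : ℤ) : Matrix (Fin n) (Fin n) ℂ :=
  (((Jmat_isUnit n).unit ^ m : (Matrix (Fin n) (Fin n) ℂ)ˣ) : Matrix (Fin n) (Fin n) ℂ)


/-- The candidate representation ϱ : block matrix with (1,1)-entry `α^{h(γ)}`,
first-row tail `(z_1(γ),…,z_{n−1}(γ))`, lower-right block `J_{n−1}^{h(γ)}`, zeros below
(the cochains `z_k`, `1 ≤ k ≤ n−1`, are encoded as `z : Γ → ℕ → ℂ`). -/
def RhoBlock (Γ : Type*) (α : ℂ) (m : ℕ) (h : Γ → ℤ) (z : Γ → ℕ → ℂ) (γ : Γ) :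
    Matrix (Fin 1 ⊕ Fin m) (Fin 1 ⊕ Fin m) ℂ :=
  Matrix.fromBlocks (Matrix.of fun _ _ => α ^ h γ)
    (Matrix.of fun _ j => z γ ((j : ℕ) + 1))
    0 (Jz m (h γ))

open Polynomial in
lemma descPoch_smeval (r : ℂ) (k : ℕ) :
    (descPochhammer ℤ k).smeval r = ∏ i ∈ Finset.range k, (r - i) := by
  induction k with
  | zero => simp [smeval_one]
  | succ k ih =>
    rw [descPochhammer_succ_right, smeval_mul, ih, Finset.prod_range_succ]
    congr 1
    simp [smeval_sub, smeval_X, smeval_natCast]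

lemma gbinom_eq_choose (m : ℤ) (k : ℕ) : gbinom m k = Ring.choose (m : ℂ) k := by
  have h := Ring.descPochhammer_eq_factorial_smul_choose (R := ℂ) (m : ℂ) k
  rw [descPoch_smeval] at h
  rw [gbinom, h, nsmul_eq_mul]
  field_simp [Nat.factorial_ne_zero]

lemma gbinom_zero_right (m : ℤ) : gbinom m 0 = 1 := by simp [gbinom]

lemma gbinom_add (t s : ℤ) (k : ℕ) :
    gbinom (t + s) k = ∑ a ∈ Finset.range (k + 1), gbinom t a * gbinom s (k - a) := by
  simp only [gbinom_eq_choose]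
  push_cast
  rw [Ring.add_choose_eq k (Commute.all _ _),
    Finset.Nat.sum_antidiagonal_eq_sum_range_succ_mk]

def Amat (m : ℕ) (t : ℤ) : Matrix (Fin m) (Fin m) ℂ :=
  Matrix.of fun i j => if (i : ℕ) ≤ (j : ℕ) then gbinom t ((j : ℕ) - i) else 0

lemma gbinom_zero_left (k : ℕ) : gbinom 0 k = if k = 0 then 1 else 0 := by
  cases k with
  | zero => simp [gbinom_zero_right]
  | succ k =>
    simp only [Nat.succ_ne_zero, if_false, gbinom]
    rw [Finset.prod_eq_zero (Finset.mem_range.mpr (Nat.succ_pos k)) (by simp), zero_div]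

lemma gbinom_one (k : ℕ) : gbinom 1 k = if k ≤ 1 then 1 else 0 := by
  match k with
  | 0 => simp [gbinom_zero_right]
  | 1 => norm_num [gbinom]
  | (k+2) =>
    simp only [show ¬ k+2 ≤ 1 by omega, if_false, gbinom]
    rw [Finset.prod_eq_zero (i := 1) (Finset.mem_range.mpr (by omega)) (by norm_num), zero_div]

lemma Amat_zero (m : ℕ) : Amat m 0 = 1 := by
  ext i j
  simp only [Amat, Matrix.of_apply, Matrix.one_apply, gbinom_zero_left]
  rcases lt_trichotomy (i : ℕ) (j : ℕ) with h | h | h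
  · rw [if_pos h.le, if_neg (by omega), if_neg (Fin.ne_of_lt h)]
  · rw [if_pos h.le, if_pos (by omega), if_pos (Fin.ext h)]
  · rw [if_neg (by omega), if_neg (Fin.ne_of_gt h)]

lemma Amat_one (m : ℕ) : Amat m 1 = Jmat m := by
  ext i j
  simp only [Amat, Matrix.of_apply, Jmat, Nmat, Matrix.add_apply, Matrix.one_apply,
    Matrix.of_apply, gbinom_one]
  rcases lt_trichotomy (i : ℕ) (j : ℕ) with h | h | h
  · rw [if_pos h.le, if_neg (Fin.ne_of_lt h)]
    by_cases h2 : (i : ℕ) + 1 = j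
    · rw [if_pos (by omega), if_pos h2]; norm_num
    · rw [if_neg (by omega), if_neg h2]; norm_num
  · rw [if_pos h.le, if_pos (by omega), if_pos (Fin.ext h), if_neg (by omega)]; norm_num
  · rw [if_neg (by omega), if_neg (Fin.ne_of_gt h), if_neg (by omega)]; norm_num

lemma Amat_mul (m : ℕ) (t s : ℤ) : Amat m t * Amat m s = Amat m (t + s) := by
  ext i j
  rw [Matrix.mul_apply]
  have hterm : ∀ l : Fin m,
      Amat m t i l * Amat m s l j
        = if (i : ℕ) ≤ (l : ℕ) ∧ (l : ℕ) ≤ (j : ℕ) then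
            gbinom t ((l : ℕ) - i) * gbinom s ((j : ℕ) - l) else 0 := by
    intro l
    simp only [Amat, Matrix.of_apply]
    split_ifs with h1 h2 h3 h3 <;> simp_all <;> omega
  simp only [hterm]
  rw [Fin.sum_univ_eq_sum_range
    (fun l => if (i : ℕ) ≤ l ∧ l ≤ (j : ℕ) then gbinom t (l - i) * gbinom s ((j : ℕ) - l) else 0) m]
  by_cases hij : (i : ℕ) ≤ (j : ℕ)
  · rw [Amat]
    simp only [Matrix.of_apply, if_pos hij]
    have hsub : Finset.Icc (i : ℕ) (j : ℕ) ⊆ Finset.range m := fun x hx => by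
      have := (Finset.mem_Icc.mp hx).2
      have := j.isLt
      exact Finset.mem_range.mpr (by omega)
    rw [← Finset.sum_subset hsub
      (fun x _ hx => by rw [if_neg (fun hc => hx (Finset.mem_Icc.mpr hc))])]
    rw [Finset.sum_congr rfl (fun x hx => if_pos (Finset.mem_Icc.mp hx))]
    rw [← Finset.Ico_add_one_right_eq_Icc, Finset.sum_Ico_eq_sum_range]
    rw [gbinom_add]
    have : (j : ℕ) + 1 - i = ((j:ℕ) - i) + 1 := by omega
    rw [this]
    refine Finset.sum_congr rfl fun a ha => ?_
    congr 2 <;> omega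
  · rw [Amat]
    simp only [Matrix.of_apply, if_neg hij]
    exact Finset.sum_eq_zero fun x _ => by rw [if_neg (by omega)]

lemma Jz_eq (m : ℕ) (t : ℤ) : Jz m t = Amat m t := by
  have hcoe : ((Jmat_isUnit m).unit : Matrix (Fin m) (Fin m) ℂ) = Amat m 1 := by
    rw [IsUnit.unit_spec, Amat_one]
  have hinv : (((Jmat_isUnit m).unit⁻¹ : (Matrix (Fin m) (Fin m) ℂ)ˣ) :
      Matrix (Fin m) (Fin m) ℂ) = Amat m (-1) := by
    refine Units.inv_eq_of_mul_eq_one_right ?_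
    rw [hcoe, Amat_mul]; norm_num [Amat_zero]
  induction t using Int.induction_on with
  | zero => simp [Jz, Amat_zero]
  | succ k ih =>
    have h1 : Jz m (k + 1) = Jz m k * Jz m 1 := by
      rw [Jz, Jz, Jz, ← Units.val_mul, ← _root_.zpow_add]
    rw [h1, ih]
    have : Jz m 1 = Amat m 1 := by simp only [Jz, zpow_one]; exact hcoe
    rw [this, Amat_mul]
  | pred k ih =>
    have h1 : Jz m (-k - 1) = Jz m (-k) * Jz m (-1) := by
      rw [Jz, Jz, Jz, ← Units.val_mul, ← _root_.zpow_add]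
      ring_nf
    rw [h1, ih]
    have : Jz m (-1) = Amat m (-1) := by
      rw [Jz, _root_.zpow_neg_one]; exact hinv
    rw [this, Amat_mul]
    congr 1

lemma Jz_add (m : ℕ) (a b : ℤ) : Jz m (a + b) = Jz m a * Jz m b := by
  rw [Jz_eq, Jz_eq, Jz_eq, Amat_mul]

lemma row_mul (m : ℕ) (w : ℕ → ℂ) (t : ℤ) (j : Fin m) :
    ∑ l : Fin m, w ((l : ℕ) + 1) * Amat m t l j
      = w ((j : ℕ) + 1) + ∑ i ∈ Finset.Icc 1 (j : ℕ), w i * gbinom t ((j : ℕ) + 1 - i) := by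
  have hterm : ∀ l : Fin m,
      w ((l : ℕ) + 1) * Amat m t l j
        = if (l : ℕ) ≤ (j : ℕ) then w ((l : ℕ) + 1) * gbinom t ((j : ℕ) - l) else 0 := by
    intro l
    simp only [Amat, Matrix.of_apply]
    split_ifs <;> simp
  simp only [hterm]
  rw [Fin.sum_univ_eq_sum_range
    (fun l => if l ≤ (j : ℕ) then w (l + 1) * gbinom t ((j : ℕ) - l) else 0) m]
  have hsub : Finset.range ((j : ℕ) + 1) ⊆ Finset.range m :=
    Finset.range_subset_range.mpr (by have := j.isLt; omega)
  rw [← Finset.sum_subset hsub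
    (fun x _ hx => by rw [if_neg (fun hc => hx (Finset.mem_range.mpr (by omega)))])]
  rw [Finset.sum_congr rfl (fun x hx => if_pos (by have := Finset.mem_range.mp hx; omega))]
  rw [Finset.sum_range_succ, Nat.sub_self, gbinom_zero_right, mul_one, add_comm]
  congr 1
  rw [← Finset.Ico_add_one_right_eq_Icc, Finset.sum_Ico_eq_sum_range]
  refine Finset.sum_congr (by congr 1) fun a ha => ?_
  congr 2 <;> omega

/-- ϱ is a group homomorphism into GL(n,ℂ) if and only if, for each `1 ≤ k ≤ n−1`,
`z_k(γ₁γ₂) = z_k(γ₁) + α^{h(γ₁)} z_k(γ₂) + Σ_{i=1}^{k−1} z_i(γ₁) h_{k−i}(γ₂)`,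
i.e. `δz_k + Σ_{i=1}^{k−1} z_i ⌣ h_{k−i} = 0`. -/
theorem stmt8 (Γ : Type*) [Group Γ] (h : Γ → ℤ)
    (hh : ∀ a b : Γ, h (a * b) = h a + h b)
    (α : ℂ) (hα : α ≠ 0) (n : ℕ) (hn : 2 ≤ n) (z : Γ → ℕ → ℂ) :
    (∀ γ₁ γ₂ : Γ,
        RhoBlock Γ α (n - 1) h z (γ₁ * γ₂)
          = RhoBlock Γ α (n - 1) h z γ₁ * RhoBlock Γ α (n - 1) h z γ₂)
    ↔ (∀ k : ℕ, 1 ≤ k → k ≤ n - 1 → ∀ γ₁ γ₂ : Γ,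
        z (γ₁ * γ₂) k
          = z γ₁ k + α ^ h γ₁ * z γ₂ k
            + ∑ i ∈ Finset.Icc 1 (k - 1), z γ₁ i * gbinom (h γ₂) (k - i)) := by
  have hentry : ∀ γ₁ γ₂ : Γ, ∀ j : Fin (n - 1),
      (RhoBlock Γ α (n - 1) h z γ₁ * RhoBlock Γ α (n - 1) h z γ₂) (Sum.inl 0) (Sum.inr j)
        = α ^ h γ₁ * z γ₂ ((j : ℕ) + 1) + (z γ₁ ((j : ℕ) + 1)
            + ∑ i ∈ Finset.Icc 1 (j : ℕ), z γ₁ i * gbinom (h γ₂) ((j : ℕ) + 1 - i)) := by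
    intro γ₁ γ₂ j
    rw [Matrix.mul_apply, Fintype.sum_sum_type]
    simp only [RhoBlock, Matrix.fromBlocks_apply₁₁, Matrix.fromBlocks_apply₁₂,
      Matrix.fromBlocks_apply₂₂, Matrix.of_apply, Fin.sum_univ_one]
    congr 1
    simp only [Jz_eq]
    exact row_mul (n - 1) (z γ₁) (h γ₂) j
  constructor
  · intro H k hk1 hk2 γ₁ γ₂
    have hj : k - 1 < n - 1 := by omega
    have := congrFun (congrFun (H γ₁ γ₂) (Sum.inl 0)) (Sum.inr ⟨k - 1, hj⟩)
    rw [hentry] at this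
    simp only [RhoBlock, Matrix.fromBlocks_apply₁₂, Matrix.of_apply] at this
    have e1 : (k - 1) + 1 = k := by omega
    simp only [e1] at this
    rw [this]; ring
  · intro H γ₁ γ₂
    ext x y
    rcases x with x | x <;> rcases y with y | y
    · rw [Matrix.mul_apply, Fintype.sum_sum_type]
      simp only [RhoBlock, Matrix.fromBlocks_apply₁₁, Matrix.fromBlocks_apply₁₂,
        Matrix.fromBlocks_apply₂₁, Matrix.of_apply, Fin.sum_univ_one, Matrix.zero_apply,
        mul_zero, Finset.sum_const_zero, add_zero]
      rw [hh, zpow_add₀ hα]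
    · obtain rfl : x = 0 := Subsingleton.elim x 0
      rw [hentry γ₁ γ₂ y]
      simp only [RhoBlock, Matrix.fromBlocks_apply₁₂, Matrix.of_apply]
      have hy1 : 1 ≤ (y : ℕ) + 1 := by omega
      have hy2 : (y : ℕ) + 1 ≤ n - 1 := by have := y.isLt; omega
      have := H ((y : ℕ) + 1) hy1 hy2 γ₁ γ₂
      simp only [Nat.add_sub_cancel] at this
      rw [this]; ring
    · rw [Matrix.mul_apply, Fintype.sum_sum_type]
      simp only [RhoBlock, Matrix.fromBlocks_apply₂₁, Matrix.fromBlocks_apply₁₁,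
        Matrix.fromBlocks_apply₂₂, Matrix.of_apply, Fin.sum_univ_one, Matrix.zero_apply,
        zero_mul, mul_zero, Finset.sum_const_zero, add_zero, zero_add]
    · rw [Matrix.mul_apply, Fintype.sum_sum_type]
      simp only [RhoBlock, Matrix.fromBlocks_apply₂₂, Matrix.fromBlocks_apply₂₁,
        Matrix.fromBlocks_apply₁₂, Matrix.of_apply, Fin.sum_univ_one, Matrix.zero_apply,
        zero_mul, Finset.sum_const_zero, zero_add]
      rw [hh, Jz_add, Matrix.mul_apply]

end
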